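/- Let p ∈ C^{log}(ℝⁿ) be a globally log-Hölder continuous variable exponent with 0 < p₋ ≤ p₊ ≤ ∞. Then there exists a constant C ≥ 1 such that for all dyadic cubes Q_{jk} = 2^{−j}([0,1)ⁿ+k) with j ∈ ℤ₊ and k ∈ ℤⁿ: C⁻¹ 2^{−jn/p₋} (1+|k|)^{n(1/p₊ − 1/p₋)} ≤ ‖χ_{Q_{jk}}‖_{L^{p(·)}(ℝⁿ)} ≤ C 2^{−jn/p₊} (1+|k|)^{n(1/p₋ − 1/p₊)}. -/

import Mathlib

open MeasureTheory Real
open scoped ENNReal BigOperators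

noncomputable section

/-- The dyadic cube `Q_{jk} = 2^{−j}([0,1)ⁿ + k)` in `ℝⁿ`. -/
def dyadicCube {n : ℕ} (j : ℤ) (k : Fin n → ℤ) : Set (EuclideanSpace ℝ (Fin n)) :=
  {x | ∀ i, (2 : ℝ) ^ (-j) * (k i : ℝ) ≤ x i ∧ x i < (2 : ℝ) ^ (-j) * ((k i : ℝ) + 1)}

/-- The variable-exponent modular for a real-valued exponent `p` and a
nonnegative function `f`. -/
def varModularR {n : ℕ} (p : EuclideanSpace ℝ (Fin n) → ℝ)
    (f : EuclideanSpace ℝ (Fin n) → ℝ≥0∞) : ℝ≥0∞ :=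
  ∫⁻ x, f x ^ p x

/-- The variable-exponent Lebesgue (Luxemburg) quasi-norm. -/
def varNormR {n : ℕ} (p : EuclideanSpace ℝ (Fin n) → ℝ)
    (f : EuclideanSpace ℝ (Fin n) → ℝ≥0∞) : ℝ≥0∞ :=
  sInf {lam : ℝ≥0∞ | 0 < lam ∧ varModularR p (fun x => f x / lam) ≤ 1}

/-- Local log-Hölder continuity. -/
def LocLogHolder {n : ℕ} (g : EuclideanSpace ℝ (Fin n) → ℝ) : Prop :=
  ∃ C : ℝ, 0 < C ∧ ∀ x y : EuclideanSpace ℝ (Fin n), x ≠ y →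
    |g x - g y| ≤ C / Real.log (Real.exp 1 + 1 / dist x y)

/-- Global log-Hölder continuity. -/
def GlobLogHolder {n : ℕ} (g : EuclideanSpace ℝ (Fin n) → ℝ) : Prop :=
  LocLogHolder g ∧ ∃ Cinf : ℝ, 0 < Cinf ∧ ∃ ginf : ℝ,
    ∀ x : EuclideanSpace ℝ (Fin n), |g x - ginf| ≤ Cinf / Real.log (Real.exp 1 + ‖x‖)

namespace VarAux
variable {n : ℕ}

lemma dyadicCube_eq (j : ℤ) (k : Fin n → ℤ) :
    dyadicCube j k = (MeasurableEquiv.toLp 2 (Fin n → ℝ)).symm ⁻¹'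
      (Set.univ.pi fun i => Set.Ico ((2:ℝ)^(-j) * (k i : ℝ)) ((2:ℝ)^(-j) * ((k i : ℝ) + 1))) := by
  ext x
  simp [dyadicCube, Set.mem_pi, MeasurableEquiv.coe_toLp_symm]

lemma measurableSet_dyadicCube (j : ℤ) (k : Fin n → ℤ) : MeasurableSet (dyadicCube j k) := by
  rw [dyadicCube_eq]
  exact (MeasurableEquiv.toLp 2 (Fin n → ℝ)).symm.measurable
    (MeasurableSet.univ_pi fun i => measurableSet_Ico)

lemma volume_dyadicCube (j : ℤ) (k : Fin n → ℤ) :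
    volume (dyadicCube j k) = ENNReal.ofReal ((2:ℝ) ^ (-(j:ℝ) * n)) := by
  rw [dyadicCube_eq,
    (EuclideanSpace.volume_preserving_symm_measurableEquiv_toLp (Fin n)).measure_preimage
      (MeasurableSet.univ_pi fun i => measurableSet_Ico).nullMeasurableSet,
    volume_pi_pi]
  have h1 : ∀ i : Fin n, (2:ℝ)^(-j) * ((k i : ℝ) + 1) - (2:ℝ)^(-j) * (k i : ℝ) = (2:ℝ)^(-j) := by
    intro i; ring
  simp only [Real.volume_Ico, h1]
  rw [Finset.prod_const, Finset.card_univ, Fintype.card_fin, ← ENNReal.ofReal_pow (by positivity)]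
  congr 1
  rw [← Real.rpow_natCast ((2:ℝ)^(-j)) n, ← Real.rpow_intCast 2 (-j), ← Real.rpow_mul (by norm_num)]
  push_cast
  ring_nf

lemma key (q t : ℝ) (hq : 0 < q) :
    (1 / ENNReal.ofReal ((2:ℝ) ^ (-t / q))) ^ q * ENNReal.ofReal ((2:ℝ) ^ (-t)) = 1 := by
  have ha : (0:ℝ) < (2:ℝ) ^ (-t/q) := Real.rpow_pos_of_pos two_pos _
  rw [one_div, ← ENNReal.ofReal_inv_of_pos ha]
  have h2 : ((2:ℝ) ^ (-t/q))⁻¹ = (2:ℝ) ^ (t/q) := by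
    rw [← Real.rpow_neg (by norm_num), neg_div, neg_neg]
  rw [h2, ENNReal.ofReal_rpow_of_pos (Real.rpow_pos_of_pos two_pos _),
    ← Real.rpow_mul (by norm_num), div_mul_cancel₀ _ hq.ne',
    ← ENNReal.ofReal_mul (Real.rpow_pos_of_pos two_pos _).le,
    ← Real.rpow_add two_pos]
  simp

lemma modular_eq (p : EuclideanSpace ℝ (Fin n) → ℝ)
    (hp : ∀ᵐ x : EuclideanSpace ℝ (Fin n) ∂volume, 0 < p x) (j : ℤ) (k : Fin n → ℤ)
    (lam : ℝ≥0∞) :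
    varModularR p (fun x => (dyadicCube j k).indicator (fun _ => (1:ℝ≥0∞)) x / lam)
      = ∫⁻ x in dyadicCube j k, (1/lam) ^ (p x) := by
  unfold varModularR
  rw [← lintegral_indicator (measurableSet_dyadicCube j k)]
  apply lintegral_congr_ae
  filter_upwards [hp] with x hx
  by_cases hxQ : x ∈ dyadicCube j k
  · simp [Set.indicator_of_mem hxQ]
  · simp [Set.indicator_of_notMem hxQ, ENNReal.zero_rpow_of_pos hx]

end VarAux

open VarAux Filter

/-- Let `p ∈ C^{log}(ℝⁿ)` with `0 < p₋ ≤ p₊ < ∞`. Then there is a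
constant `C ≥ 1` such that for all dyadic cubes `Q_{jk}` with `j ∈ ℤ₊, k ∈ ℤⁿ`:
`C⁻¹ 2^{−jn/p₋}(1+|k|)^{n(1/p₊−1/p₋)} ≤ ‖χ_{Q_{jk}}‖_{p(·)} ≤ C 2^{−jn/p₊}(1+|k|)^{n(1/p₋−1/p₊)}`. -/
theorem varNorm_indicator_dyadicCube_bounds {n : ℕ}
    (p : EuclideanSpace ℝ (Fin n) → ℝ)
    (hp_meas : Measurable p)
    (hp_log : GlobLogHolder p)
    (hp_minus : 0 < essInf p (volume : Measure (EuclideanSpace ℝ (Fin n)))) :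
    ∃ C : ℝ, 1 ≤ C ∧ ∀ (j : ℕ) (k : Fin n → ℤ),
      (ENNReal.ofReal (C⁻¹ * (2 : ℝ) ^ (-(j : ℝ) * n /
            essInf p (volume : Measure (EuclideanSpace ℝ (Fin n)))) *
          (1 + ((∑ i, |k i| : ℤ) : ℝ)) ^
            ((n : ℝ) * (1 / essSup p (volume : Measure (EuclideanSpace ℝ (Fin n)))
              - 1 / essInf p (volume : Measure (EuclideanSpace ℝ (Fin n)))))) ≤
        varNormR p (Set.indicator (dyadicCube (j : ℤ) k) (fun _ => 1))) ∧
      (varNormR p (Set.indicator (dyadicCube (j : ℤ) k) (fun _ => 1)) ≤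
        ENNReal.ofReal (C * (2 : ℝ) ^ (-(j : ℝ) * n /
            essSup p (volume : Measure (EuclideanSpace ℝ (Fin n)))) *
          (1 + ((∑ i, |k i| : ℤ) : ℝ)) ^
            ((n : ℝ) * (1 / essInf p (volume : Measure (EuclideanSpace ℝ (Fin n)))
              - 1 / essSup p (volume : Measure (EuclideanSpace ℝ (Fin n))))))) := by
  obtain ⟨-, Cinf, hCinf, ginf, hg⟩ := hp_log
  set pm := essInf p (volume : Measure (EuclideanSpace ℝ (Fin n))) with hpm_def
  set ps := essSup p (volume : Measure (EuclideanSpace ℝ (Fin n))) with hps_def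
  have hb : ∀ x, |p x - ginf| ≤ Cinf := by
    intro x
    refine (hg x).trans ?_
    apply div_le_self hCinf.le
    exact le_trans (le_of_eq (Real.log_exp 1).symm)
      (Real.log_le_log (Real.exp_pos 1) (le_add_of_nonneg_right (norm_nonneg x)))
  have hub : IsBoundedUnder (· ≤ ·) (ae (volume : Measure (EuclideanSpace ℝ (Fin n)))) p :=
    ⟨ginf + Cinf, eventually_map.mpr (Eventually.of_forall fun x => by
      have := abs_le.mp (hb x); linarith)⟩
  have hlb : IsBoundedUnder (· ≥ ·) (ae (volume : Measure (EuclideanSpace ℝ (Fin n)))) p :=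
    ⟨ginf - Cinf, eventually_map.mpr (Eventually.of_forall fun x => by
      have := abs_le.mp (hb x); simp only [ge_iff_le]; linarith)⟩
  have hsup : ∀ᵐ x ∂(volume : Measure (EuclideanSpace ℝ (Fin n))), p x ≤ ps :=
    ae_le_essSup hub
  have hinf : ∀ᵐ x ∂(volume : Measure (EuclideanSpace ℝ (Fin n))), pm ≤ p x :=
    ae_essInf_le hlb
  have hvolne : (volume : Measure (EuclideanSpace ℝ (Fin n))) ≠ 0 := by
    intro h
    have h0 := volume_dyadicCube (n := n) 0 0
    rw [h] at h0
    simp at h0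
  have hne : (ae (volume : Measure (EuclideanSpace ℝ (Fin n)))).NeBot := ae_neBot.mpr hvolne
  obtain ⟨x₀, hx₀⟩ := (hsup.and hinf).exists
  have hms : pm ≤ ps := le_trans hx₀.2 hx₀.1
  have hpm : 0 < pm := hp_minus
  have hpspos : 0 < ps := lt_of_lt_of_le hpm hms
  have hppos : ∀ᵐ x ∂(volume : Measure (EuclideanSpace ℝ (Fin n))), 0 < p x :=
    hinf.mono fun x hx => lt_of_lt_of_le hpm hx
  refine ⟨1, le_refl 1, fun j k => ?_⟩
  have hjn : (0:ℝ) ≤ (j:ℝ) * n := by positivity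
  set K : ℝ := ((∑ i, |k i| : ℤ) : ℝ) with hK_def
  have hK : (1:ℝ) ≤ 1 + K := by
    have h1 : (0:ℤ) ≤ ∑ i, |k i| := Finset.sum_nonneg fun i _ => abs_nonneg _
    have h2 : (0:ℝ) ≤ K := by rw [hK_def]; exact_mod_cast h1
    linarith
  have hvol : volume (dyadicCube (j:ℤ) k) = ENNReal.ofReal ((2:ℝ) ^ (-((j:ℝ) * n))) := by
    rw [volume_dyadicCube]
    congr 2
    push_cast
    ring
  constructor
  · -- lower bound
    set b := (2:ℝ) ^ (-((j:ℝ) * n) / pm) with hb_def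
    have hb0 : 0 < b := Real.rpow_pos_of_pos two_pos _
    have hb1 : b ≤ 1 :=
      Real.rpow_le_one_of_one_le_of_nonpos (by norm_num)
        (div_nonpos_iff.mpr (Or.inr ⟨by linarith, hpm.le⟩))
    have hlow : ENNReal.ofReal b ≤ varNormR p (Set.indicator (dyadicCube (j:ℤ) k) fun _ => 1) := by
      apply le_sInf
      rintro lam ⟨hlam0, hmod⟩
      by_contra hcon
      push_neg at hcon
      have hlam1 : lam ≤ 1 := hcon.le.trans (ENNReal.ofReal_le_one.mpr hb1)
      have hbase : (1:ℝ≥0∞) ≤ 1/lam := by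
        rw [one_div]; exact ENNReal.one_le_inv.mpr hlam1
      have hchain : (1:ℝ≥0∞) < varModularR p
          (fun x => Set.indicator (dyadicCube (j:ℤ) k) (fun _ => 1) x / lam) := by
        rw [modular_eq p hppos]
        calc (1:ℝ≥0∞) = (1/ENNReal.ofReal b)^pm * volume (dyadicCube (j:ℤ) k) := by
              rw [hvol]; exact (key pm ((j:ℝ)*n) hpm).symm
          _ < (1/lam)^pm * volume (dyadicCube (j:ℤ) k) := by
              apply ENNReal.mul_lt_mul_left (by rw [hvol]; simp [Real.rpow_pos_of_pos two_pos])
                (by rw [hvol]; exact ENNReal.ofReal_ne_top)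
              apply ENNReal.rpow_lt_rpow _ hpm
              rw [one_div, one_div]
              exact ENNReal.inv_lt_inv.mpr hcon
          _ = ∫⁻ _ in dyadicCube (j:ℤ) k, (1/lam)^pm := (setLIntegral_const _ _).symm
          _ ≤ ∫⁻ x in dyadicCube (j:ℤ) k, (1/lam)^(p x) :=
              lintegral_mono_ae ((ae_restrict_of_ae hinf).mono fun x hx =>
                ENNReal.rpow_le_rpow_of_exponent_le hbase hx)
      exact absurd hmod (not_le.mpr hchain)
    refine le_trans ?_ hlow
    apply ENNReal.ofReal_le_ofReal
    have hf1 : (1 + K) ^ ((n:ℝ) * (1/ps - 1/pm)) ≤ 1 :=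
      Real.rpow_le_one_of_one_le_of_nonpos hK
        (mul_nonpos_of_nonneg_of_nonpos (Nat.cast_nonneg n)
          (by
            have := one_div_le_one_div_of_le hpm hms
            linarith))
    have hb' : (2:ℝ) ^ (-(j:ℝ) * n / pm) = b := by rw [hb_def]; ring_nf
    calc (1:ℝ)⁻¹ * (2:ℝ) ^ (-(j:ℝ) * n / pm) * (1 + K) ^ ((n:ℝ) * (1/ps - 1/pm))
        ≤ (1:ℝ)⁻¹ * (2:ℝ) ^ (-(j:ℝ) * n / pm) * 1 := by
          apply mul_le_mul_of_nonneg_left hf1 (by positivity)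
      _ = b := by rw [mul_one, inv_one, one_mul, hb']
  · -- upper bound
    set a := (2:ℝ) ^ (-((j:ℝ) * n) / ps) with ha_def
    have ha0 : 0 < a := Real.rpow_pos_of_pos two_pos _
    have ha1 : a ≤ 1 :=
      Real.rpow_le_one_of_one_le_of_nonpos (by norm_num)
        (div_nonpos_iff.mpr (Or.inr ⟨by linarith, hpspos.le⟩))
    have hbase : (1:ℝ≥0∞) ≤ 1/ENNReal.ofReal a := by
      rw [one_div]; exact ENNReal.one_le_inv.mpr (ENNReal.ofReal_le_one.mpr ha1)
    have hup : varNormR p (Set.indicator (dyadicCube (j:ℤ) k) fun _ => 1)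
        ≤ ENNReal.ofReal a := by
      apply sInf_le
      refine ⟨ENNReal.ofReal_pos.mpr ha0, ?_⟩
      rw [modular_eq p hppos]
      calc ∫⁻ x in dyadicCube (j:ℤ) k, (1/ENNReal.ofReal a)^(p x)
          ≤ ∫⁻ _ in dyadicCube (j:ℤ) k, (1/ENNReal.ofReal a)^ps :=
            lintegral_mono_ae ((ae_restrict_of_ae hsup).mono fun x hx =>
              ENNReal.rpow_le_rpow_of_exponent_le hbase hx)
        _ = (1/ENNReal.ofReal a)^ps * volume (dyadicCube (j:ℤ) k) := setLIntegral_const _ _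
        _ = 1 := by rw [hvol]; exact key ps ((j:ℝ)*n) hpspos
    refine le_trans hup ?_
    apply ENNReal.ofReal_le_ofReal
    have hf1 : (1:ℝ) ≤ (1 + K) ^ ((n:ℝ) * (1/pm - 1/ps)) :=
      Real.one_le_rpow hK
        (mul_nonneg (Nat.cast_nonneg n)
          (by
            have := one_div_le_one_div_of_le hpm hms
            linarith))
    have ha' : (2:ℝ) ^ (-(j:ℝ) * n / ps) = a := by rw [ha_def]; ring_nf
    calc a = 1 * (2:ℝ) ^ (-(j:ℝ) * n / ps) * 1 := by rw [ha', one_mul, mul_one]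
      _ ≤ 1 * (2:ℝ) ^ (-(j:ℝ) * n / ps) * (1 + K) ^ ((n:ℝ) * (1/pm - 1/ps)) := by
          apply mul_le_mul_of_nonneg_left hf1 (by positivity)
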